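/- arXiv:1602.03671 — 4 statements merged into one kernel-verified Lean document; each statement's English description precedes it below -/
import Mathlib

section
/- The real quaternion algebra ℍ is ℤ₂³-commutative: the family of ℝ-submodules of ℍ assigning the real span of 1 to degree (0,0,0), the real span of i to degree (0,1,1), the real span of j to degree (1,0,1), the real span of k to degree (1,1,0), and the zero submodule to the remaining four elements of (ZMod 2)³, is an internal direct sum decomposition of ℍ making it a (ZMod 2)³-graded ℝ-algebra (1 lies in the degree-(0,0,0) component and the product of elements of degrees α and β lies in the component of degree α+β); moreover, any homogeneous x of degree α and y of degree β satisfy x*y = y*x if ⟨α,β⟩ = 0 and x*y = -(y*x) if ⟨α,β⟩ = 1. -/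
open Quaternion

/-- The `ℤ₂³`-grading of the real quaternions: the real span of `1` in degree `(0,0,0)`,
of `i` in degree `(0,1,1)`, of `j` in degree `(1,0,1)`, of `k` in degree `(1,1,0)`,
and `0` in the four remaining degrees. -/
noncomputable def quaternionGrading : (Fin 3 → ZMod 2) → Submodule ℝ ℍ[ℝ] := fun α =>
  if α = ![0, 0, 0] then Submodule.span ℝ {(1 : ℍ[ℝ])}
  else if α = ![0, 1, 1] then Submodule.span ℝ {(⟨0, 1, 0, 0⟩ : ℍ[ℝ])}
  else if α = ![1, 0, 1] then Submodule.span ℝ {(⟨0, 0, 1, 0⟩ : ℍ[ℝ])}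
  else if α = ![1, 1, 0] then Submodule.span ℝ {(⟨0, 0, 0, 1⟩ : ℍ[ℝ])}
  else ⊥

noncomputable def qi : ℍ[ℝ] := ⟨0, 1, 0, 0⟩
noncomputable def qj : ℍ[ℝ] := ⟨0, 0, 1, 0⟩
noncomputable def qk : ℍ[ℝ] := ⟨0, 0, 0, 1⟩
@[simp] lemma qi_re : qi.re = 0 := rfl
@[simp] lemma qi_imI : qi.imI = 1 := rfl
@[simp] lemma qi_imJ : qi.imJ = 0 := rfl
@[simp] lemma qi_imK : qi.imK = 0 := rfl
@[simp] lemma qj_re : qj.re = 0 := rfl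
@[simp] lemma qj_imI : qj.imI = 0 := rfl
@[simp] lemma qj_imJ : qj.imJ = 1 := rfl
@[simp] lemma qj_imK : qj.imK = 0 := rfl
@[simp] lemma qk_re : qk.re = 0 := rfl
@[simp] lemma qk_imI : qk.imI = 0 := rfl
@[simp] lemma qk_imJ : qk.imJ = 0 := rfl
@[simp] lemma qk_imK : qk.imK = 1 := rfl

/-- The homogeneous generator in each degree. -/
noncomputable def qV : (Fin 3 → ZMod 2) → ℍ[ℝ] := fun α =>
  if α = ![0, 0, 0] then 1
  else if α = ![0, 1, 1] then qi
  else if α = ![1, 0, 1] then qj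
  else if α = ![1, 1, 0] then qk
  else 0

lemma quaternionGrading_eq (α : Fin 3 → ZMod 2) :
    quaternionGrading α = Submodule.span ℝ {qV α} := by
  unfold quaternionGrading
  split_ifs with h1 h2 h3 h4
  · rw [show qV α = 1 by simp (config := { decide := true }) [qV, h1]]
  · rw [show qV α = qi by simp (config := { decide := true }) [qV, h2]]; rfl
  · rw [show qV α = qj by simp (config := { decide := true }) [qV, h3]]; rfl
  · rw [show qV α = qk by simp (config := { decide := true }) [qV, h4]]; rfl
  · rw [show qV α = 0 by simp [qV, h1, h2, h3, h4], Submodule.span_zero_singleton]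

lemma zcases (α : Fin 3 → ZMod 2) :
    α = ![0,0,0] ∨ α = ![0,0,1] ∨ α = ![0,1,0] ∨ α = ![0,1,1] ∨
    α = ![1,0,0] ∨ α = ![1,0,1] ∨ α = ![1,1,0] ∨ α = ![1,1,1] := by
  have key : ∀ a b c : ZMod 2,
      ![a,b,c] = ![0,0,0] ∨ ![a,b,c] = ![0,0,1] ∨ ![a,b,c] = ![0,1,0] ∨ ![a,b,c] = ![0,1,1] ∨
      ![a,b,c] = ![1,0,0] ∨ ![a,b,c] = ![1,0,1] ∨ ![a,b,c] = ![1,1,0] ∨ ![a,b,c] = ![1,1,1] := by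
    decide
  have h : α = ![α 0, α 1, α 2] := by funext i; fin_cases i <;> rfl
  rw [h]; exact key _ _ _

set_option maxHeartbeats 4000000 in
lemma qV_key (α β : Fin 3 → ZMod 2) :
    (∃ c : ℝ, qV α * qV β = c • qV (α + β)) ∧
    ((∑ i, α i * β i) = 0 → qV α * qV β = qV β * qV α) ∧
    ((∑ i, α i * β i) = 1 → qV α * qV β = -(qV β * qV α)) := by
  rcases zcases α with rfl|rfl|rfl|rfl|rfl|rfl|rfl|rfl <;>
  rcases zcases β with rfl|rfl|rfl|rfl|rfl|rfl|rfl|rfl <;>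
  refine ⟨?_, fun h => ?_, fun h => ?_⟩
  all_goals simp (config := { decide := true }) only [qV, if_true, if_false, ↓reduceIte,
    one_mul, mul_one, zero_mul, mul_zero, neg_zero]
  all_goals first
    | (exfalso; revert h; decide; done)
    | (refine ⟨(0:ℝ), ?_⟩; ext <;> simp; done)
    | (refine ⟨(1:ℝ), ?_⟩; ext <;> simp; done)
    | (refine ⟨(-1:ℝ), ?_⟩; ext <;> simp; done)
    | (ext <;> simp; done)

lemma indep_main (α : Fin 3 → ZMod 2) (f : ℍ[ℝ] →ₗ[ℝ] ℝ) (hf : f (qV α) = 1)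
    (hker : ∀ β, β ≠ α → f (qV β) = 0) :
    Disjoint (quaternionGrading α) (⨆ β, ⨆ (_ : β ≠ α), quaternionGrading β) := by
  have hle : (⨆ β, ⨆ (_ : β ≠ α), quaternionGrading β) ≤ LinearMap.ker f := by
    refine iSup_le fun β => iSup_le fun hβ => ?_
    rw [quaternionGrading_eq, Submodule.span_le, Set.singleton_subset_iff]
    exact hker β hβ
  rw [quaternionGrading_eq, Submodule.disjoint_def]
  intro x hx hx2
  obtain ⟨r, rfl⟩ := Submodule.mem_span_singleton.mp hx
  have h0 : f (r • qV α) = 0 := hle hx2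
  rw [map_smul, hf, smul_eq_mul, mul_one] at h0
  simp [h0]

set_option maxHeartbeats 2000000 in
/-- The real quaternion algebra `ℍ` is `ℤ₂³`-commutative: the family `quaternionGrading`
is an internal direct sum decomposition of `ℍ` making it a `(ZMod 2)³`-graded `ℝ`-algebra
(`1` lies in the degree-`0` component, and products of homogeneous elements of degrees
`α` and `β` are homogeneous of degree `α + β`), and homogeneous elements `x` of degree
`α` and `y` of degree `β` commute if `⟨α, β⟩ = 0` and anticommute if `⟨α, β⟩ = 1`. -/
theorem quaternion_isZ2pow3Commutative :
    DirectSum.IsInternal quaternionGrading ∧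
    (1 : ℍ[ℝ]) ∈ quaternionGrading 0 ∧
    (∀ (α β : Fin 3 → ZMod 2), ∀ x ∈ quaternionGrading α, ∀ y ∈ quaternionGrading β,
      x * y ∈ quaternionGrading (α + β)) ∧
    (∀ (α β : Fin 3 → ZMod 2), ∀ x ∈ quaternionGrading α, ∀ y ∈ quaternionGrading β,
      ((∑ i, α i * β i) = 0 → x * y = y * x) ∧
      ((∑ i, α i * β i) = 1 → x * y = -(y * x))) := by
  refine ⟨?_, ?_, ?_, ?_⟩
  · -- IsInternal
    apply DirectSum.isInternal_submodule_of_iSupIndep_of_iSup_eq_top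
    · -- independence
      intro α
      rcases zcases α with rfl|rfl|rfl|rfl|rfl|rfl|rfl|rfl
      · refine indep_main _ (QuaternionAlgebra.reₗ (-1 : ℝ) 0 (-1)) ?_ fun β hβ => ?_
        · simp (config := { decide := true }) [qV, QuaternionAlgebra.reₗ] <;> rfl
        rcases zcases β with rfl|rfl|rfl|rfl|rfl|rfl|rfl|rfl <;>
        first
          | exact absurd rfl hβ
          | (simp (config := { decide := true }) [qV, QuaternionAlgebra.reₗ, QuaternionAlgebra.imIₗ, QuaternionAlgebra.imJₗ, QuaternionAlgebra.imKₗ] <;> rfl)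
      · rw [show quaternionGrading _ = ⊥ from by
          unfold quaternionGrading; simp (config := { decide := true })]
        exact disjoint_bot_left
      · rw [show quaternionGrading _ = ⊥ from by
          unfold quaternionGrading; simp (config := { decide := true })]
        exact disjoint_bot_left
      · refine indep_main _ (QuaternionAlgebra.imIₗ (-1 : ℝ) 0 (-1)) ?_ fun β hβ => ?_
        · simp (config := { decide := true }) [qV, QuaternionAlgebra.imIₗ] <;> rfl
        rcases zcases β with rfl|rfl|rfl|rfl|rfl|rfl|rfl|rfl <;>
        first
          | exact absurd rfl hβ
          | (simp (config := { decide := true }) [qV, QuaternionAlgebra.reₗ, QuaternionAlgebra.imIₗ, QuaternionAlgebra.imJₗ, QuaternionAlgebra.imKₗ] <;> rfl)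
      · rw [show quaternionGrading _ = ⊥ from by
          unfold quaternionGrading; simp (config := { decide := true })]
        exact disjoint_bot_left
      · refine indep_main _ (QuaternionAlgebra.imJₗ (-1 : ℝ) 0 (-1)) ?_ fun β hβ => ?_
        · simp (config := { decide := true }) [qV, QuaternionAlgebra.imJₗ] <;> rfl
        rcases zcases β with rfl|rfl|rfl|rfl|rfl|rfl|rfl|rfl <;>
        first
          | exact absurd rfl hβ
          | (simp (config := { decide := true }) [qV, QuaternionAlgebra.reₗ, QuaternionAlgebra.imIₗ, QuaternionAlgebra.imJₗ, QuaternionAlgebra.imKₗ] <;> rfl)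
      · refine indep_main _ (QuaternionAlgebra.imKₗ (-1 : ℝ) 0 (-1)) ?_ fun β hβ => ?_
        · simp (config := { decide := true }) [qV, QuaternionAlgebra.imKₗ] <;> rfl
        rcases zcases β with rfl|rfl|rfl|rfl|rfl|rfl|rfl|rfl <;>
        first
          | exact absurd rfl hβ
          | (simp (config := { decide := true }) [qV, QuaternionAlgebra.reₗ, QuaternionAlgebra.imIₗ, QuaternionAlgebra.imJₗ, QuaternionAlgebra.imKₗ] <;> rfl)
      · rw [show quaternionGrading _ = ⊥ from by
          unfold quaternionGrading; simp (config := { decide := true })]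
        exact disjoint_bot_left
    · -- iSup = ⊤
      rw [eq_top_iff]
      rintro ⟨a, b, c, d⟩ _
      have hsum : (⟨a, b, c, d⟩ : ℍ[ℝ]) =
          a • qV ![0,0,0] + b • qV ![0,1,1] + c • qV ![1,0,1] + d • qV ![1,1,0] := by
        simp (config := { decide := true }) only [qV, if_true, if_false, ↓reduceIte]
        ext <;> simp
      rw [hsum]
      refine add_mem (add_mem (add_mem ?_ ?_) ?_) ?_ <;>
      · apply Submodule.mem_iSup_of_mem
        rw [quaternionGrading_eq]
        exact Submodule.smul_mem _ _ (Submodule.mem_span_singleton_self _)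
  · -- 1 ∈ degree 0
    have h0 : (0 : Fin 3 → ZMod 2) = ![0,0,0] := by decide
    rw [h0, quaternionGrading_eq]
    have h1 : qV ![0,0,0] = 1 := by
      simp (config := { decide := true }) only [qV, if_true, if_false, ↓reduceIte]
    rw [h1]
    exact Submodule.mem_span_singleton_self _
  · -- multiplication
    intro α β x hx y hy
    rw [quaternionGrading_eq] at hx hy ⊢
    obtain ⟨r, rfl⟩ := Submodule.mem_span_singleton.mp hx
    obtain ⟨s, rfl⟩ := Submodule.mem_span_singleton.mp hy
    obtain ⟨c, hc⟩ := (qV_key α β).1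
    rw [smul_mul_assoc, mul_smul_comm, hc]
    rw [Submodule.mem_span_singleton]
    exact ⟨r * (s * c), by rw [mul_smul, mul_smul]⟩
  · -- commutation
    intro α β x hx y hy
    rw [quaternionGrading_eq] at hx hy
    obtain ⟨r, rfl⟩ := Submodule.mem_span_singleton.mp hx
    obtain ⟨s, rfl⟩ := Submodule.mem_span_singleton.mp hy
    obtain ⟨-, h0, h1⟩ := qV_key α β
    constructor
    · intro h
      rw [smul_mul_assoc, mul_smul_comm, h0 h, smul_mul_assoc, mul_smul_comm, smul_comm]
    · intro h
      rw [smul_mul_assoc, mul_smul_comm, h1 h, smul_mul_assoc, mul_smul_comm, smul_comm,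
        smul_neg, smul_neg]
end

section
/- For every m ∈ ℕ and every symmetric matrix S over ZMod 2 of size m × m, there exists a matrix A ∈ Matrix (Fin (2m)) (Fin m) (ZMod 2) such that S = Aᵀ * A; equivalently, there exist vectors d₁, …, d_m ∈ (ZMod 2)^(2m) such that ⟨dᵢ, dⱼ⟩ = S i j for all i, j. (This realizes every sign rule on m generators as the scalar-product sign rule of ℤ₂ⁿ-degrees with n ≤ 2m.) -/
open Matrix

section aux

variable {m : ℕ}

private def ee (S : Matrix (Fin m) (Fin m) (ZMod 2)) (i : Fin m) : ZMod 2 := 1 + S i i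

private def FF (S : Matrix (Fin m) (Fin m) (ZMod 2)) (i k : Fin m) : ZMod 2 :=
  if i < k then S i k
  else if k = i then (if (i : ℕ) = 0 then S i i else 1)
  else ee S i * (if (k : ℕ) = 0 then 0 else ee S k)

private def GG (S : Matrix (Fin m) (Fin m) (ZMod 2)) (i k : Fin m) : ZMod 2 :=
  if i < k then S i k
  else if k = i then 0
  else ee S i * (if (k : ℕ) = 0 then 1 else ee S k)

private lemma key_diag (S : Matrix (Fin m) (Fin m) (ZMod 2)) (i : Fin m) :
    ∑ k, (FF S i k * FF S i k + GG S i k * GG S i k) = S i i := by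
  have hz : (0 : ℕ) < m := i.pos
  set z : Fin m := ⟨0, hz⟩ with hzdef
  have hpt : ∀ k, FF S i k * FF S i k + GG S i k * GG S i k =
      (if k = i then (if (i : ℕ) = 0 then S i i else 1) else 0) +
      (if k = z then (if i = z then 0 else ee S i) else 0) := by
    intro k
    have hkz : ((k : ℕ) = 0) ↔ k = z := by simp [Fin.ext_iff, hzdef]
    rcases lt_trichotomy i k with h | h | h
    · have h1 : ¬ k = i := by exact fun e => absurd e (by simp [Fin.ext_iff]; omega)
      have h2 : ¬ k = z := by simp only [Fin.ext_iff, hzdef]; omega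
      simp only [FF, GG, if_pos h, if_neg h1, if_neg h2]
      generalize S i k = a
      revert a; decide
    · obtain rfl := h.symm
      have h1 : ¬ k < k := lt_irrefl _
      by_cases hk0 : (k : ℕ) = 0
      · have hz2 := hkz.1 hk0
        simp only [FF, GG, if_neg h1, if_pos rfl, if_pos hk0, if_pos hz2, ite_true, if_true,
          eq_self_iff_true]
        generalize S k k = a
        revert a; decide
      · have hz2 : ¬ k = z := fun e => hk0 (hkz.2 e)
        simp only [FF, GG, ee, if_neg h1, if_pos rfl, if_neg hk0, if_neg hz2, ite_true, if_true,
          eq_self_iff_true]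
        generalize S k k = a
        revert a; decide
    · -- k < i
      have h1 : ¬ i < k := not_lt.2 h.le
      have h2 : ¬ k = i := Fin.ne_of_lt h
      have h3 : ¬ i = z := by
        simp only [Fin.ext_iff, hzdef]
        have := h
        simp only [Fin.lt_def] at this
        omega
      simp only [FF, GG, if_neg h1, if_neg h2, if_neg h3]
      by_cases hk0 : (k : ℕ) = 0
      · rw [if_pos hk0, if_pos hk0, if_pos (hkz.1 hk0)]
        generalize ee S i = a
        revert a; decide
      · rw [if_neg hk0, if_neg hk0, if_neg (fun e => hk0 (hkz.2 e))]
        generalize ee S i = a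
        generalize ee S k = b
        revert a b; decide
  rw [Finset.sum_congr rfl (fun k _ => hpt k)]
  rw [Finset.sum_add_distrib, Finset.sum_ite_eq' Finset.univ i, Finset.sum_ite_eq' Finset.univ z]
  simp only [Finset.mem_univ, if_pos]
  by_cases hiz : i = z
  · have : (i : ℕ) = 0 := by rw [hiz]
    rw [if_pos this, if_pos hiz, add_zero]
  · have : ¬ (i : ℕ) = 0 := by
      intro e
      exact hiz (by simp [Fin.ext_iff, hzdef, e])
    rw [if_neg this, if_neg hiz]
    simp only [ee]
    generalize S i i = a
    revert a; decide

private lemma key_off (S : Matrix (Fin m) (Fin m) (ZMod 2)) (i j : Fin m) (hij : i < j) :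
    ∑ k, (FF S i k * FF S j k + GG S i k * GG S j k) = S i j := by
  have hz : (0 : ℕ) < m := i.pos
  set z : Fin m := ⟨0, hz⟩ with hzdef
  have hj0 : ¬ (j : ℕ) = 0 := by
    have := hij
    simp only [Fin.lt_def] at this
    omega
  set w : ZMod 2 := if i = z then 0 else ee S i * ee S j with hwdef
  have hpt : ∀ k, FF S i k * FF S j k + GG S i k * GG S j k =
      (if k = j then S i j else 0) + ((if k = i then w else 0) + (if k = z then w else 0)) := by
    intro k
    have hkz : ((k : ℕ) = 0) ↔ k = z := by simp [Fin.ext_iff, hzdef]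
    rcases lt_trichotomy j k with h | h | h
    · -- j < k, so i < k
      have hik : i < k := hij.trans h
      have h1 : ¬ k = j := by
        simp only [Fin.ext_iff]; simp only [Fin.lt_def] at h; omega
      have h2 : ¬ k = i := by
        simp only [Fin.ext_iff]; simp only [Fin.lt_def] at hik; omega
      have h3 : ¬ k = z := by
        simp only [Fin.ext_iff, hzdef]; simp only [Fin.lt_def] at hik; omega
      simp only [FF, GG, if_pos h, if_pos hik, if_neg h1, if_neg h2, if_neg h3]
      generalize S i k = a
      generalize S j k = b
      revert a b; decide
    · -- k = j
      obtain rfl := h.symm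
      have h1 : ¬ k < k := lt_irrefl _
      have h2 : ¬ k = i := (Fin.ne_of_lt hij).symm
      have h3 : ¬ k = z := fun e => hj0 (by rw [e])
      simp only [FF, GG, if_pos hij, if_neg h1, if_pos rfl, if_neg hj0, if_neg h2, if_neg h3,
        ite_true, if_true, eq_self_iff_true]
      generalize S i k = a
      revert a; decide
    · rcases lt_trichotomy i k with h' | h' | h'
      · -- i < k < j
        have h1 : ¬ k = j := Fin.ne_of_lt h
        have h2 : ¬ k = i := (Fin.ne_of_lt h').symm
        have h3 : ¬ k = z := by
          simp only [Fin.ext_iff, hzdef]; simp only [Fin.lt_def] at h'; omega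
        have hk0 : ¬ (k : ℕ) = 0 := fun e => h3 (hkz.1 e)
        have h4 : ¬ j < k := not_lt.2 h.le
        simp only [FF, GG, if_pos h', if_neg h4, if_neg h1, if_neg hk0, if_neg h2, if_neg h3]
        generalize S i k = a
        generalize ee S j = b
        generalize ee S k = c
        revert a b c; decide
      · -- k = i
        obtain rfl := h'.symm
        have h1 : ¬ k < k := lt_irrefl _
        have h4 : ¬ j < k := not_lt.2 hij.le
        have h5 : ¬ k = j := Fin.ne_of_lt hij
        by_cases hk0 : (k : ℕ) = 0
        · have hz2 := hkz.1 hk0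
          simp only [FF, GG, hwdef, if_neg h1, if_neg h4, if_neg h5, if_pos rfl, if_pos hk0,
            if_pos hz2, ite_true, if_true, eq_self_iff_true]
          generalize S k k = a
          generalize ee S j = b
          revert a b; decide
        · have hz2 : ¬ k = z := fun e => hk0 (hkz.2 e)
          simp only [FF, GG, hwdef, ee, if_neg h1, if_neg h4, if_neg h5, if_pos rfl, if_neg hk0,
            if_neg hz2, ite_true, if_true, eq_self_iff_true]
          generalize S k k = a
          generalize S j j = b
          revert a b; decide
      · -- k < i < j
        have h1 : ¬ i < k := not_lt.2 h'.le
        have h4 : ¬ j < k := not_lt.2 h.le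
        have h2 : ¬ k = i := Fin.ne_of_lt h'
        have h5 : ¬ k = j := Fin.ne_of_lt h
        have h6 : ¬ i = z := by
          simp only [Fin.ext_iff, hzdef]; simp only [Fin.lt_def] at h'; omega
        by_cases hk0 : (k : ℕ) = 0
        · have hz2 := hkz.1 hk0
          simp only [FF, GG, hwdef, if_neg h1, if_neg h4, if_neg h2, if_neg h5, if_pos hk0,
            if_pos hz2, if_neg h6, ite_true, if_true, eq_self_iff_true]
          generalize ee S i = a
          generalize ee S j = b
          revert a b; decide
        · have hz2 : ¬ k = z := fun e => hk0 (hkz.2 e)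
          simp only [FF, GG, hwdef, if_neg h1, if_neg h4, if_neg h2, if_neg h5, if_neg hk0,
            if_neg hz2, if_neg h6, ite_true, if_true, eq_self_iff_true]
          generalize ee S i = a
          generalize ee S j = b
          generalize ee S k = c
          revert a b c; decide
  rw [Finset.sum_congr rfl (fun k _ => hpt k)]
  rw [Finset.sum_add_distrib, Finset.sum_add_distrib, Finset.sum_ite_eq' Finset.univ j,
    Finset.sum_ite_eq' Finset.univ i, Finset.sum_ite_eq' Finset.univ z]
  simp only [Finset.mem_univ, if_pos]
  generalize w = a
  generalize S i j = b
  revert a b; decide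

private lemma key (S : Matrix (Fin m) (Fin m) (ZMod 2)) (hS : S.IsSymm) (i j : Fin m) :
    ∑ k, (FF S i k * FF S j k + GG S i k * GG S j k) = S i j := by
  rcases lt_trichotomy i j with h | h | h
  · exact key_off S i j h
  · subst h; exact key_diag S i
  · have := key_off S j i h
    have hsym : S i j = S j i := by
      have := congrFun (congrFun hS i) j
      simpa [Matrix.transpose_apply] using this.symm
    rw [hsym, ← this]
    exact Finset.sum_congr rfl (fun k _ => by ring)

end aux

/-- Every sign rule on `m` generators, i.e. every symmetric `m × m` matrix `S` over
`ZMod 2`, is realized as the scalar-product sign rule of `ℤ₂ⁿ`-degrees with `n = 2 * m`: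
there is a matrix `A` of size `2m × m` over `ZMod 2` with `S = Aᵀ * A`; the columns
`dᵢ = A · i` of `A` are vectors in `(ZMod 2)^(2m)` with `⟨dᵢ, dⱼ⟩ = S i j`. -/
theorem sign_rule_is_scalar_product_rule (m : ℕ) (S : Matrix (Fin m) (Fin m) (ZMod 2))
    (hS : S.IsSymm) :
    ∃ A : Matrix (Fin (2 * m)) (Fin m) (ZMod 2),
      S = Aᵀ * A ∧ ∀ i j : Fin m, (∑ k : Fin (2 * m), A k i * A k j) = S i j := by
  set B : Fin (m + m) → Fin m → ZMod 2 :=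
    fun r i => Fin.addCases (fun k => FF S i k) (fun k => GG S i k) r with hB
  refine ⟨fun r i => B (finCongr (two_mul m) r) i, ?_, ?_⟩
  · ext i j
    erw [Matrix.mul_apply]
    show S i j = ∑ r, B (finCongr (two_mul m) r) i * B (finCongr (two_mul m) r) j
    symm
    rw [Fintype.sum_equiv (finCongr (two_mul m))
      (fun r => B (finCongr (two_mul m) r) i * B (finCongr (two_mul m) r) j)
      (fun r => B r i * B r j) (fun r => rfl)]
    rw [Fin.sum_univ_add]
    simp only [hB, Fin.addCases_left, Fin.addCases_right]
    rw [← Finset.sum_add_distrib]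
    exact key S hS i j
  · intro i j
    rw [Fintype.sum_equiv (finCongr (two_mul m))
      (fun r => B (finCongr (two_mul m) r) i * B (finCongr (two_mul m) r) j)
      (fun r => B r i * B r j) (fun r => rfl)]
    rw [Fin.sum_univ_add]
    simp only [hB, Fin.addCases_left, Fin.addCases_right]
    rw [← Finset.sum_add_distrib]
    exact key S hS i j
end

section
/- Let R be a commutative ring, q ∈ ℕ, and let J be the ideal of the formal power series ring R[[ξ₁,…,ξ_q]] = MvPowerSeries (Fin q) R consisting of the power series with zero constant term. Then for every k ∈ ℕ, the residue classes modulo J^{k+2} of the monomials ξ^μ with |μ| = k+1 form a basis of the R-module J^{k+1}/J^{k+2}; in particular, J^{k+1}/J^{k+2} is a free R-module of rank equal to the number of multi-indices μ ∈ ℕ^q with |μ| = k+1, and J/J² is free with basis the classes of ξ₁,…,ξ_q. -/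
section Aux

variable {R : Type*} [CommRing R] {q : ℕ}

private lemma deg_le_aux (μ : Fin q →₀ ℕ) (i : Fin q) : μ i ≤ μ.sum fun _ n => n := by
  by_cases h : i ∈ μ.support
  · exact Finset.single_le_sum (f := fun a => μ a) (fun _ _ => Nat.zero_le _) h
  · simp [Finsupp.notMem_support_iff.1 h]

private lemma deg_add_aux (u v : Fin q →₀ ℕ) :
    ((u + v).sum fun _ n => n) = (u.sum fun _ n => n) + (v.sum fun _ n => n) :=
  Finsupp.sum_add_index' (fun _ => rfl) (fun _ _ _ => rfl)

private lemma coeff_zero_of_mem_pow {J : Ideal (MvPowerSeries (Fin q) R)}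
    (hJ : J = RingHom.ker ((MvPowerSeries.constantCoeff : MvPowerSeries (Fin q) R →+* R))) :
    ∀ (n : ℕ) (f : MvPowerSeries (Fin q) R), f ∈ J ^ n →
      ∀ ν : Fin q →₀ ℕ, (ν.sum fun _ n => n) < n → MvPowerSeries.coeff ν f = 0 := by
  intro n
  induction n with
  | zero => intro f _ ν hν; omega
  | succ n ih =>
    intro f hf
    rw [pow_succ] at hf
    refine Submodule.mul_induction_on hf ?_ ?_
    · intro a ha b hb ν hν
      classical
      rw [MvPowerSeries.coeff_mul]
      apply Finset.sum_eq_zero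
      rintro ⟨u, v⟩ huv
      replace huv : u + v = ν := by simpa using huv
      by_cases h : (u.sum fun _ n => n) < n
      · rw [ih a ha u h, zero_mul]
      · have hd : (u.sum fun _ n => n) + (v.sum fun _ n => n) = ν.sum fun _ n => n := by
          rw [← huv, deg_add_aux]
        have hv : v = 0 := by
          ext i
          have h1 := deg_le_aux v i
          simp only [Finsupp.coe_zero, Pi.zero_apply]
          omega
        subst hv
        have hb0 : MvPowerSeries.coeff 0 b = 0 := by
          rw [MvPowerSeries.coeff_zero_eq_constantCoeff_apply]
          rw [hJ] at hb
          exact hb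
        rw [hb0, mul_zero]
    · intro x y hx hy ν hν
      rw [map_add, hx ν hν, hy ν hν, add_zero]

private lemma mem_pow_of_coeff_zero {J : Ideal (MvPowerSeries (Fin q) R)}
    (hJ : J = RingHom.ker ((MvPowerSeries.constantCoeff : MvPowerSeries (Fin q) R →+* R))) :
    ∀ (n : ℕ) (f : MvPowerSeries (Fin q) R),
      (∀ ν : Fin q →₀ ℕ, (ν.sum fun _ n => n) < n → MvPowerSeries.coeff ν f = 0) →
      f ∈ J ^ n := by
  intro n
  induction n with
  | zero => intro f _; simp [Ideal.one_eq_top]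
  | succ n ih =>
    intro f hf
    classical
    set g : Fin q → MvPowerSeries (Fin q) R := fun i μ =>
      if ∀ j, j < i → μ j = 0 then MvPowerSeries.coeff (μ + Finsupp.single i 1) f else 0
      with hg
    have hgc : ∀ i μ, MvPowerSeries.coeff μ (g i) =
        if ∀ j, j < i → μ j = 0 then MvPowerSeries.coeff (μ + Finsupp.single i 1) f
        else 0 := fun i μ => rfl
    have hfg : f = ∑ i : Fin q, MvPowerSeries.X i * g i := by
      ext ν
      rw [map_sum]
      by_cases hν : ν = 0
      · subst hν
        rw [hf 0 (by simp)]
        symm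
        apply Finset.sum_eq_zero
        intro i _
        rw [MvPowerSeries.X_def, MvPowerSeries.coeff_monomial_mul, if_neg]
        rw [Finsupp.single_le_iff]
        simp
      · have hne : ν.support.Nonempty := Finsupp.support_nonempty_iff.2 hν
        set i₀ := ν.support.min' hne with hi₀
        have hν0 : ν i₀ ≠ 0 := Finsupp.mem_support_iff.1 (ν.support.min'_mem hne)
        have hmin : ∀ j, j < i₀ → ν j = 0 := by
          intro j hj
          by_contra hc
          exact absurd (ν.support.min'_le j (Finsupp.mem_support_iff.2 hc)) (not_le.2 hj)
        have key : ∀ i : Fin q, MvPowerSeries.coeff ν (MvPowerSeries.X i * g i)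
            = if i = i₀ then MvPowerSeries.coeff ν f else 0 := by
          intro i
          rw [MvPowerSeries.X_def, MvPowerSeries.coeff_monomial_mul]
          by_cases hle : Finsupp.single i 1 ≤ ν
          · rw [if_pos hle, one_mul, hgc]
            have hνi : 1 ≤ ν i := Finsupp.single_le_iff.1 hle
            have hsub : ∀ j : Fin q, j ≠ i →
                (ν - Finsupp.single i 1 : Fin q →₀ ℕ) j = ν j := by
              intro j hj
              rw [Finsupp.tsub_apply, Finsupp.single_apply,
                if_neg (fun h => hj h.symm)]
              exact Nat.sub_zero _
            by_cases hcond : ∀ j, j < i → ν j = 0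
            · have hii : i = i₀ := by
                have h1 : i₀ ≤ i := ν.support.min'_le i (Finsupp.mem_support_iff.2 (by omega))
                rcases lt_or_eq_of_le h1 with h | h
                · exact absurd (hcond i₀ h) hν0
                · exact h.symm
              rw [if_pos (fun j hj => by rw [hsub j (ne_of_lt hj)]; exact hcond j hj),
                tsub_add_cancel_of_le hle, if_pos hii]
            · have hii : i ≠ i₀ := by
                intro h
                exact hcond (fun j hj => hmin j (by rw [← h]; exact hj))
              rw [if_neg (fun hc => hcond fun j hj =>
                    by rw [← hsub j (ne_of_lt hj)]; exact hc j hj),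
                if_neg hii]
          · rw [if_neg hle]
            have h0 : ν i = 0 := by
              by_contra hc
              exact hle (Finsupp.single_le_iff.2 (by omega))
            rw [if_neg (fun h => hν0 (by rw [← h]; exact h0))]
        symm
        calc ∑ i : Fin q, MvPowerSeries.coeff ν (MvPowerSeries.X i * g i)
            = ∑ i : Fin q, if i = i₀ then MvPowerSeries.coeff ν f else 0 :=
              Finset.sum_congr rfl (fun i _ => key i)
          _ = MvPowerSeries.coeff ν f := by
              rw [Finset.sum_ite_eq' Finset.univ i₀ (fun _ => MvPowerSeries.coeff ν f),
                if_pos (Finset.mem_univ _)]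
    rw [hfg, pow_succ]
    refine Submodule.sum_mem _ fun i _ => ?_
    rw [mul_comm (MvPowerSeries.X i) (g i)]
    refine Ideal.mul_mem_mul (ih (g i) ?_) ?_
    · intro ν hν
      rw [hgc]
      split_ifs with h
      · apply hf
        rw [deg_add_aux, Finsupp.sum_single_index rfl]
        omega
      · rfl
    · rw [hJ]
      exact RingHom.mem_ker.2 (MvPowerSeries.constantCoeff_X i)

set_option maxHeartbeats 1000000 in
private lemma basis_aux (R : Type*) [CommRing R] (q : ℕ)
    (J : Ideal (MvPowerSeries (Fin q) R))
    (hJ : J = RingHom.ker ((MvPowerSeries.constantCoeff : MvPowerSeries (Fin q) R →+* R))) (n m : ℕ)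
    (hnm : m = n + 1) :
    ∃ b : Module.Basis {μ : Fin q →₀ ℕ // (μ.sum fun _ k => k) = n} R
      (Submodule.restrictScalars R
        ((J ^ n).map (Ideal.Quotient.mk (J ^ m)))),
      ∀ μ, (b μ : MvPowerSeries (Fin q) R ⧸ J ^ m) =
        Ideal.Quotient.mk (J ^ m) (MvPowerSeries.monomial μ.1 (1 : R)) := by
  subst hnm
  classical
  have hfin : Finite {μ : Fin q →₀ ℕ // (μ.sum fun _ k => k) = n} := by
    apply Finite.of_injective
      (f := fun μ : {μ : Fin q →₀ ℕ // (μ.sum fun _ k => k) = n} =>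
        (fun i => (⟨μ.1 i, by have h1 := deg_le_aux μ.1 i; have h2 := μ.2; omega⟩ :
          Fin (n + 1)) : Fin q → Fin (n + 1)))
    intro μ ν h
    apply Subtype.ext
    ext i
    exact congrArg Fin.val (congrFun h i)
  letI : Fintype {μ : Fin q →₀ ℕ // (μ.sum fun _ k => k) = n} := Fintype.ofFinite _
  set T := {μ : Fin q →₀ ℕ // (μ.sum fun _ k => k) = n} with hT
  set mk := Ideal.Quotient.mk (J ^ (n + 1)) with hmkdef
  have hmk_smul : ∀ (c : R) (f : MvPowerSeries (Fin q) R), mk (c • f) = c • mk f := by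
    intro c f
    rw [hmkdef, ← Ideal.Quotient.mkₐ_eq_mk (R₁ := R)]
    exact map_smul (Ideal.Quotient.mkₐ R (J ^ (n + 1))) c f
  have hmono : ∀ μ : T, MvPowerSeries.monomial μ.1 (1 : R) ∈ J ^ n := by
    intro μ
    apply mem_pow_of_coeff_zero hJ
    intro ν hν
    rw [MvPowerSeries.coeff_monomial, if_neg]
    intro h
    rw [h] at hν
    have := μ.2
    omega
  set M := Submodule.restrictScalars R ((J ^ n).map mk) with hM
  have hvmem : ∀ μ : T, mk (MvPowerSeries.monomial μ.1 (1 : R)) ∈ M := fun μ =>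
    Ideal.mem_map_of_mem mk (hmono μ)
  set v : T → M := fun μ => ⟨mk (MvPowerSeries.monomial μ.1 (1 : R)), hvmem μ⟩ with hv
  have hli : LinearIndependent R v := by
    rw [linearIndependent_iff']
    intro s c hsum μ hμ
    have h0 : (∑ x ∈ s, c x • mk (MvPowerSeries.monomial x.1 (1 : R))) = 0 := by
      have h1 := congrArg M.subtype hsum
      rw [map_sum, map_zero] at h1
      simpa [v] using h1
    have h1 : mk (∑ x ∈ s, c x • MvPowerSeries.monomial x.1 (1 : R)) = 0 := by
      rw [map_sum]
      simp_rw [hmk_smul]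
      exact h0
    have h2 : (∑ x ∈ s, c x • MvPowerSeries.monomial x.1 (1 : R)) ∈ J ^ (n + 1) :=
      Ideal.Quotient.eq_zero_iff_mem.1 h1
    have h3 := coeff_zero_of_mem_pow hJ (n + 1) _ h2 μ.1 (by have := μ.2; omega)
    rw [map_sum, Finset.sum_eq_single μ] at h3
    · simpa [MvPowerSeries.coeff_monomial] using h3
    · intro ν _ hνμ
      rw [map_smul, MvPowerSeries.coeff_monomial, if_neg, smul_zero]
      intro h
      exact hνμ (Subtype.ext h.symm)
    · intro h
      exact absurd hμ h
  have hsp : ⊤ ≤ Submodule.span R (Set.range v) := by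
    intro x _
    obtain ⟨f, hfJ, hfx⟩ :=
      (Ideal.mem_map_iff_of_surjective mk Ideal.Quotient.mk_surjective).1 x.2
    have hdiff : ∀ ν : Fin q →₀ ℕ, (ν.sum fun _ k => k) < n + 1 →
        MvPowerSeries.coeff ν
          (f - ∑ μ : T, MvPowerSeries.coeff μ.1 f • MvPowerSeries.monomial μ.1 (1 : R)) = 0 := by
      intro ν hν
      rw [map_sub, map_sum]
      by_cases hdeg : (ν.sum fun _ k => k) = n
      · rw [Finset.sum_eq_single (⟨ν, hdeg⟩ : T)]
        · simp [MvPowerSeries.coeff_monomial]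
        · intro μ _ hμν
          rw [map_smul, MvPowerSeries.coeff_monomial, if_neg, smul_zero]
          intro h
          exact hμν (Subtype.ext h.symm)
        · intro h
          exact absurd (Finset.mem_univ _) h
      · have hlt : (ν.sum fun _ k => k) < n := by omega
        rw [coeff_zero_of_mem_pow hJ n f hfJ ν hlt, Finset.sum_eq_zero, sub_zero]
        intro μ _
        rw [map_smul, MvPowerSeries.coeff_monomial, if_neg, smul_zero]
        intro h
        rw [h] at hdeg
        exact hdeg μ.2
    have hmem := mem_pow_of_coeff_zero hJ (n + 1) _ hdiff
    have heq : mk f =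
        mk (∑ μ : T, MvPowerSeries.coeff μ.1 f • MvPowerSeries.monomial μ.1 (1 : R)) :=
      Ideal.Quotient.eq.2 hmem
    have hx2 : x = ∑ μ : T, MvPowerSeries.coeff μ.1 f • v μ := by
      apply Subtype.ext
      have hcoe : ((∑ μ : T, MvPowerSeries.coeff μ.1 f • v μ : M) : _)
          = ∑ μ : T, MvPowerSeries.coeff μ.1 f • mk (MvPowerSeries.monomial μ.1 (1 : R)) := by
        have h4 := map_sum M.subtype
          (fun μ : T => MvPowerSeries.coeff μ.1 f • v μ) Finset.univ
        simpa [v] using h4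
      rw [hcoe, ← hfx]
      show mk f = _
      rw [heq, map_sum]
      simp_rw [hmk_smul]
    rw [hx2]
    exact Submodule.sum_mem _ fun μ _ =>
      Submodule.smul_mem _ _ (Submodule.subset_span ⟨μ, rfl⟩)
  refine ⟨Module.Basis.mk hli hsp, fun μ => ?_⟩
  rw [Module.Basis.mk_apply]

end Aux

set_option maxHeartbeats 1000000 in
/-- Let `J` be the ideal of `R[[ξ₁, …, ξ_q]] = MvPowerSeries (Fin q) R` of power series
with zero constant term.  For every `k`, the classes modulo `J ^ (k + 2)` of the monomials
`ξ^μ` with `|μ| = k + 1` form a basis of the `R`-module `J^(k+1)/J^(k+2)` (realized as the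
image of `J ^ (k + 1)` in the quotient ring `R[[ξ]]/J^(k+2)`); in particular this module
is free of rank the number of multi-indices `μ` with `|μ| = k + 1`.  Moreover `J/J²` is
free with basis the classes of `ξ₁, …, ξ_q`. -/
theorem augmentation_quotients_free (R : Type*) [CommRing R] (q : ℕ)
    (J : Ideal (MvPowerSeries (Fin q) R))
    (hJ : J = RingHom.ker ((MvPowerSeries.constantCoeff : MvPowerSeries (Fin q) R →+* R))) :
    (∀ k : ℕ,
      ∃ b : Module.Basis {μ : Fin q →₀ ℕ // (μ.sum fun _ n => n) = k + 1} R
        (Submodule.restrictScalars R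
          ((J ^ (k + 1)).map (Ideal.Quotient.mk (J ^ (k + 2))))),
        ∀ μ, (b μ : MvPowerSeries (Fin q) R ⧸ J ^ (k + 2)) =
          Ideal.Quotient.mk (J ^ (k + 2)) ((MvPowerSeries.monomial μ.1 (1 : R)))) ∧
    ∃ b : Module.Basis (Fin q) R
      (Submodule.restrictScalars R (J.map (Ideal.Quotient.mk (J ^ 2)))),
      ∀ i, (b i : MvPowerSeries (Fin q) R ⧸ J ^ 2) =
        Ideal.Quotient.mk (J ^ 2) (MvPowerSeries.X i) := by
  constructor
  · intro k
    exact basis_aux R q J hJ (k + 1) (k + 2) rfl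
  · obtain ⟨b, hb⟩ := basis_aux R q J hJ 1 2 rfl
    have hmap' : Submodule.restrictScalars R
          ((J ^ 1).map (Ideal.Quotient.mk (J ^ 2)))
        = Submodule.restrictScalars R (J.map (Ideal.Quotient.mk (J ^ 2))) := by
      rw [pow_one]
    set e := LinearEquiv.ofEq _ _ hmap' with he
    have hsingle : ∀ i : Fin q, ((Finsupp.single i 1).sum fun _ k => k) = 1 := fun i =>
      Finsupp.sum_single_index rfl
    have hbij : Function.Bijective
        (fun i : Fin q => (⟨Finsupp.single i 1, hsingle i⟩ :
          {μ : Fin q →₀ ℕ // (μ.sum fun _ k => k) = 1})) := by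
      constructor
      · intro i j h
        exact Finsupp.single_left_injective one_ne_zero (congrArg Subtype.val h)
      · rintro ⟨μ, hμ⟩
        have hne : μ ≠ 0 := by
          intro h
          rw [h] at hμ
          simp at hμ
        obtain ⟨i, hi⟩ := Finsupp.support_nonempty_iff.2 hne
        refine ⟨i, Subtype.ext ?_⟩
        show Finsupp.single i 1 = μ
        have hi' : μ i ≠ 0 := Finsupp.mem_support_iff.1 hi
        ext j
        rw [Finsupp.single_apply]
        by_cases hji : i = j
        · subst hji
          rw [if_pos rfl]
          have h1 : μ i ≤ 1 := hμ ▸ deg_le_aux μ i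
          omega
        · rw [if_neg hji]
          symm
          by_contra hc
          have hsum2 : μ i + μ j ≤ μ.sum fun _ k => k := by
            have hsub : ({i, j} : Finset (Fin q)) ⊆ μ.support := by
              intro a ha
              simp only [Finset.mem_insert, Finset.mem_singleton] at ha
              rcases ha with rfl | rfl
              · exact hi
              · exact Finsupp.mem_support_iff.2 hc
            calc μ i + μ j = ∑ a ∈ ({i, j} : Finset (Fin q)), μ a :=
                  (Finset.sum_pair hji).symm
              _ ≤ ∑ a ∈ μ.support, μ a := Finset.sum_le_sum_of_subset hsub
              _ = μ.sum fun _ k => k := rfl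
          rw [hμ] at hsum2
          omega
    refine ⟨(b.map e).reindex (Equiv.ofBijective _ hbij).symm, fun i => ?_⟩
    rw [Module.Basis.reindex_apply, Equiv.symm_symm, Module.Basis.map_apply]
    have h5 : (e (b (Equiv.ofBijective _ hbij i)) :
        MvPowerSeries (Fin q) R ⧸ J ^ 2) = (b (Equiv.ofBijective _ hbij i) :
        MvPowerSeries (Fin q) R ⧸ J ^ 2) := rfl
    rw [h5, hb]
    rw [MvPowerSeries.X_def]
    rfl
end

section
/- Let U ⊆ ℝ^p be open, let C^∞(U) be the ℝ-algebra of smooth real-valued functions on U, and let B = MvPowerSeries (Fin q) (C^∞(U)) be the algebra of formal power series in ξ₁,…,ξ_q with coefficients in C^∞(U). Let φ, ψ : C^∞(U) → B be ℝ-algebra homomorphisms that are local in the sense that for every x₀ ∈ U and every g ∈ C^∞(U) with g(x₀) = 0, the constant coefficients of φ(g) and of ψ(g) vanish at x₀. If φ(P|_U) = ψ(P|_U) for every polynomial P ∈ ℝ[x₁,…,x_p], then φ = ψ. (A local algebra morphism from smooth functions into a formal power series algebra is determined by its values on polynomials.) -/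
open scoped Classical

/-- The commutative `ℝ`-algebra `C^∞(U)` of smooth real-valued functions on an open set
`U ⊆ ℝ^p`, realized as a subalgebra of the algebra of all functions `U → ℝ`:
a function belongs to it iff its extension by `0` is `C^∞` on `U`
(for `U` open this does not depend on the chosen extension). -/
noncomputable def smoothFunctions (p : ℕ) (U : Set (Fin p → ℝ)) : Subalgebra ℝ (U → ℝ) where
  carrier := {f | ContDiffOn ℝ (⊤ : ℕ∞)
    (fun x : Fin p → ℝ => if h : x ∈ U then f ⟨x, h⟩ else 0) U}
  mul_mem' := fun hf hg => (hf.mul hg).congr fun x hx => by simp [hx]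
  one_mem' := (contDiffOn_const (c := (1 : ℝ))).congr fun x hx => by simp [hx]
  add_mem' := fun hf hg => (hf.add hg).congr fun x hx => by simp [hx]
  zero_mem' := (contDiffOn_const (c := (0 : ℝ))).congr fun x hx => by simp [hx]
  algebraMap_mem' := fun r => (contDiffOn_const (c := r)).congr fun x hx => by simp [hx]


set_option maxHeartbeats 1000000
set_option synthInstance.maxHeartbeats 400000

section Aux
open MeasureTheory Metric Set intervalIntegral

theorem aux_contDiff_param {E : Type} [NormedAddCommGroup E] [NormedSpace ℝ E]
    [FiniteDimensional ℝ E] (n : ℕ) :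
    ∀ {F : Type} [NormedAddCommGroup F] [NormedSpace ℝ F] [FiniteDimensional ℝ F] [CompleteSpace F]
      (H : ℝ × E → F), ContDiff ℝ ((⊤:ℕ∞) : WithTop ℕ∞) H →
      ContDiff ℝ (n : ℕ∞) fun x => ∫ t in (0:ℝ)..1, H (t, x) := by
  induction n with
  | zero =>
    intro F _ _ _ _ H hH
    refine contDiff_zero.mpr ?_ |>.of_le (by exact_mod_cast le_refl _)
    rw [continuous_iff_continuousAt]
    intro x₀
    obtain ⟨C, hC⟩ : ∃ C, ∀ y ∈ (Icc (0:ℝ) 1) ×ˢ closedBall x₀ 1, ‖H y‖ ≤ C :=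
      ((isCompact_Icc.prod (isCompact_closedBall x₀ 1)).exists_bound_of_continuousOn
        hH.continuous.continuousOn)
    apply continuousAt_of_dominated_interval (bound := fun _ => C)
    · exact Filter.Eventually.of_forall fun x =>
        (hH.continuous.comp (continuous_id.prodMk continuous_const)).aestronglyMeasurable
    · filter_upwards [ball_mem_nhds x₀ one_pos] with x hx
      refine Filter.Eventually.of_forall fun t ht => ?_
      have ht' : t ∈ Icc (0:ℝ) 1 := by
        rw [uIoc_of_le (by norm_num : (0:ℝ) ≤ 1)] at ht
        exact ⟨le_of_lt ht.1, ht.2⟩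
      exact hC (t, x) ⟨ht', ball_subset_closedBall hx⟩
    · exact intervalIntegrable_const
    · exact Filter.Eventually.of_forall fun t _ =>
        (hH.continuous.comp (continuous_const.prodMk continuous_id)).continuousAt
  | succ n ih =>
    intro F _ _ _ _ H hH
    set H₂ : ℝ × E → E →L[ℝ] F := fun y =>
      (fderiv ℝ H y).comp (ContinuousLinearMap.inr ℝ ℝ E) with hH₂def
    have hH₂ : ContDiff ℝ ((⊤:ℕ∞) : WithTop ℕ∞) H₂ :=
      (hH.fderiv_right (m := ((⊤:ℕ∞) : WithTop ℕ∞)) (by exact_mod_cast le_refl _)).clm_comp contDiff_const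
    have key : ∀ x₀ : E, HasFDerivAt (fun x => ∫ t in (0:ℝ)..1, H (t, x))
        (∫ t in (0:ℝ)..1, H₂ (t, x₀)) x₀ := by
      intro x₀
      obtain ⟨C, hC⟩ : ∃ C, ∀ y ∈ (Icc (0:ℝ) 1) ×ˢ closedBall x₀ 1, ‖H₂ y‖ ≤ C :=
        ((isCompact_Icc.prod (isCompact_closedBall x₀ 1)).exists_bound_of_continuousOn
          hH₂.continuous.continuousOn)
      apply intervalIntegral.hasFDerivAt_integral_of_dominated_of_fderiv_le
        (F := fun x t => H (t, x)) (F' := fun x t => H₂ (t, x)) (bound := fun _ => C)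
        (s := ball x₀ 1) (ball_mem_nhds x₀ one_pos)
      · exact Filter.Eventually.of_forall fun x =>
          (hH.continuous.comp (continuous_id.prodMk continuous_const)).aestronglyMeasurable
      · exact (hH.continuous.comp (continuous_id.prodMk continuous_const)).intervalIntegrable _ _
      · exact (hH₂.continuous.comp (continuous_id.prodMk continuous_const)).aestronglyMeasurable
      · refine Filter.Eventually.of_forall fun t ht x hx => ?_
        have ht' : t ∈ Icc (0:ℝ) 1 := by
          rw [uIoc_of_le (by norm_num : (0:ℝ) ≤ 1)] at ht
          exact ⟨le_of_lt ht.1, ht.2⟩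
        exact hC (t, x) ⟨ht', ball_subset_closedBall hx⟩
      · exact intervalIntegrable_const
      · refine Filter.Eventually.of_forall fun t ht x hx => ?_
        have h1 : HasFDerivAt H (fderiv ℝ H (t, x)) (t, x) :=
          (hH.differentiable (by simp) (t, x)).hasFDerivAt
        have h2 : HasFDerivAt (fun x : E => (t, x)) (ContinuousLinearMap.inr ℝ ℝ E) x :=
          hasFDerivAt_prodMk_right t x
        exact h1.comp x h2
    have hdiff : Differentiable ℝ fun x => ∫ t in (0:ℝ)..1, H (t, x) :=
      fun x => (key x).differentiableAt
    suffices hs : ContDiff ℝ ((n : ℕ∞) + 1) (fun x => ∫ t in (0:ℝ)..1, H (t, x)) by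
      exact hs.of_le (by exact_mod_cast le_refl _)
    rw [contDiff_succ_iff_fderiv]
    refine ⟨hdiff, by simp, ?_⟩
    have : (fderiv ℝ fun x => ∫ t in (0:ℝ)..1, H (t, x)) =
        fun x => ∫ t in (0:ℝ)..1, H₂ (t, x) := funext fun x => (key x).fderiv
    rw [this]
    exact ih H₂ hH₂

theorem aux_hadamard {p : ℕ} (F : (Fin p → ℝ) → ℝ)
    (hF : ContDiff ℝ ((⊤:ℕ∞) : WithTop ℕ∞) F) (x₀ : Fin p → ℝ) :
    ∃ g : Fin p → ((Fin p → ℝ) → ℝ), (∀ i, ContDiff ℝ ((⊤:ℕ∞) : WithTop ℕ∞) (g i)) ∧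
      ∀ x, F x = F x₀ + ∑ i, (x i - x₀ i) * g i x := by
  classical
  set c : ℝ × (Fin p → ℝ) → (Fin p → ℝ) := fun y => x₀ + y.1 • (y.2 - x₀) with hc
  have hcs : ContDiff ℝ ((⊤:ℕ∞) : WithTop ℕ∞) c :=
    contDiff_const.add (contDiff_fst.smul (contDiff_snd.sub contDiff_const))
  have hdF : ContDiff ℝ ((⊤:ℕ∞) : WithTop ℕ∞) (fderiv ℝ F) :=
    hF.fderiv_right (m := ((⊤:ℕ∞) : WithTop ℕ∞)) (by exact_mod_cast le_refl _)
  refine ⟨fun i x => ∫ t in (0:ℝ)..1, (fderiv ℝ F (c (t, x))) (Pi.single i 1), ?_, ?_⟩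
  · intro i
    have hH : ContDiff ℝ ((⊤:ℕ∞) : WithTop ℕ∞)
        (fun y : ℝ × (Fin p → ℝ) => (fderiv ℝ F (c y)) (Pi.single i 1)) :=
      (hdF.comp hcs).clm_apply contDiff_const
    exact contDiff_infty.mpr fun n => aux_contDiff_param n _ hH
  · intro x
    have hline : ∀ t : ℝ, HasDerivAt (fun s : ℝ => c (s, x))
        (x - x₀) t := by
      intro t
      simpa [hc] using ((hasDerivAt_id t).smul_const (x - x₀)).const_add x₀
    have hu : ∀ t ∈ uIcc (0:ℝ) 1, HasDerivAt (fun s => F (c (s, x)))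
        ((fderiv ℝ F (c (t, x))) (x - x₀)) t := by
      intro t _
      exact ((hF.differentiable (by simp) (c (t, x))).hasFDerivAt).comp_hasDerivAt
        t (hline t)
    have hcont : Continuous fun t => (fderiv ℝ F (c (t, x))) (x - x₀) :=
      ((hdF.comp hcs).clm_apply contDiff_const).continuous.comp
        (continuous_id.prodMk continuous_const)
    have hFTC := intervalIntegral.integral_eq_sub_of_hasDerivAt hu
      (hcont.intervalIntegrable 0 1)
    have h0 : c (0, x) = x₀ := by simp [hc]
    have h1 : c (1, x) = x := by simp [hc]
    rw [h1, h0] at hFTC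
    have hdec : ∀ t : ℝ, (fderiv ℝ F (c (t, x))) (x - x₀) =
        ∑ i, (x i - x₀ i) * (fderiv ℝ F (c (t, x))) (Pi.single i 1) := by
      intro t
      have : (x - x₀) = ∑ i, (x i - x₀ i) • (Pi.single i 1 : Fin p → ℝ) := by
        funext j
        simp [Finset.sum_apply, Pi.single_apply, mul_ite]
      rw [this, map_sum]
      congr 1; funext i
      rw [(fderiv ℝ F (c (t, x))).map_smul]; simp [smul_eq_mul]
    calc F x = F x₀ + ((F x) - F x₀) := by ring
    _ = F x₀ + ∑ i, (x i - x₀ i) * ∫ t in (0:ℝ)..1, (fderiv ℝ F (c (t, x))) (Pi.single i 1) := by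
        rw [← hFTC]
        congr 1
        rw [intervalIntegral.integral_congr (g := fun t => ∑ i, (x i - x₀ i) *
          (fderiv ℝ F (c (t, x))) (Pi.single i 1)) (fun t _ => hdec t)]
        rw [intervalIntegral.integral_finset_sum]
        · congr 1; funext i
          rw [← intervalIntegral.integral_const_mul]
        · intro i _
          have hci : Continuous fun t : ℝ => (fderiv ℝ F (c (t, x))) (Pi.single i 1) :=
            ((hdF.comp hcs).clm_apply contDiff_const).continuous.comp
              (continuous_id.prodMk continuous_const)
          exact (continuous_const.mul hci).intervalIntegrable 0 1

theorem aux_restrict_mem {p : ℕ} {U : Set (Fin p → ℝ)} (G : (Fin p → ℝ) → ℝ)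
    (hG : ContDiff ℝ ((⊤:ℕ∞) : WithTop ℕ∞) G) :
    (fun x : U => G ↑x) ∈ smoothFunctions p U := by
  show ContDiffOn ℝ (⊤ : ℕ∞) _ U
  exact hG.contDiffOn.congr fun x hx => by simp [hx]

theorem aux_poly_mem {p : ℕ} {U : Set (Fin p → ℝ)} (P : MvPolynomial (Fin p) ℝ) :
    (fun x : U => MvPolynomial.eval (↑x : Fin p → ℝ) P) ∈ smoothFunctions p U := by
  have h : ContDiff ℝ ((⊤:ℕ∞) : WithTop ℕ∞) (fun y : Fin p → ℝ => MvPolynomial.eval y P) := by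
    induction P using MvPolynomial.induction_on with
    | C a => simpa using contDiff_const
    | add p q hp hq => simpa [MvPolynomial.eval_add] using hp.add hq
    | mul_X p i hp => simpa [MvPolynomial.eval_mul] using hp.mul (contDiff_apply ℝ ℝ i)
  exact aux_restrict_mem (fun y => MvPolynomial.eval y P) h

theorem aux_decomp {p : ℕ} {U : Set (Fin p → ℝ)} (hU : IsOpen U)
    (f : smoothFunctions p U) (x₀ : U) :
    ∃ (P : MvPolynomial (Fin p) ℝ) (k : ℕ) (a b : Fin k → smoothFunctions p U),
      (∀ j, (a j : U → ℝ) x₀ = 0) ∧ (∀ j, (b j : U → ℝ) x₀ = 0) ∧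
      ∀ x : U, (f : U → ℝ) x =
        MvPolynomial.eval (↑x : Fin p → ℝ) P + ∑ j, (a j : U → ℝ) x * (b j : U → ℝ) x := by
  classical
  obtain ⟨r, hr, hball⟩ := Metric.isOpen_iff.mp hU _ x₀.2
  set c : Fin p → ℝ := ↑x₀ with hcdef
  set χ : ContDiffBump c := ⟨r/3, r/2, by positivity, by linarith⟩ with hχdef
  set χ₂ : ContDiffBump c := ⟨r/6, r/3, by positivity, by linarith⟩ with hχ₂def
  have hχU : closedBall c (r/2) ⊆ U :=
    Subset.trans (closedBall_subset_ball (by linarith)) hball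
  set fext : (Fin p → ℝ) → ℝ :=
    fun x => if h : x ∈ U then (f : U → ℝ) ⟨x, h⟩ else 0 with hfext
  have hf : ContDiffOn ℝ (⊤ : ℕ∞) fext U := f.2
  set F : (Fin p → ℝ) → ℝ := fun x => χ x * fext x with hFdef
  have hF : ContDiff ℝ ((⊤:ℕ∞) : WithTop ℕ∞) F := by
    rw [contDiff_iff_contDiffAt]
    intro x
    by_cases hx : x ∈ U
    · exact ((χ.contDiff.contDiffOn.mul hf).contDiffAt (hU.mem_nhds hx))
    · have hx' : x ∈ (closedBall c (r/2))ᶜ := fun hmem => hx (hχU hmem)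
      have : ∀ᶠ y in nhds x, F y = 0 := by
        filter_upwards [(isClosed_closedBall (x := c) (ε := r/2)).isOpen_compl.mem_nhds hx'] with y hy
        have : χ y = 0 := χ.zero_of_le_dist (le_of_not_gt fun hlt => hy (by
          simpa [mem_closedBall] using le_of_lt hlt))
        simp [hFdef, this]
      exact (contDiffAt_const (c := (0:ℝ))).congr_of_eventuallyEq this
  obtain ⟨g, hg, hgeq⟩ := aux_hadamard F hF c
  -- polynomial
  set P : MvPolynomial (Fin p) ℝ :=
    MvPolynomial.C ((f : U → ℝ) x₀) +
      ∑ i, MvPolynomial.C (g i c) * (MvPolynomial.X i - MvPolynomial.C (c i)) with hPdef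
  have hχc : χ c = 1 := χ.one_of_mem_closedBall (mem_closedBall_self (by positivity))
  have hχ₂c : χ₂ c = 1 := χ₂.one_of_mem_closedBall (mem_closedBall_self (by positivity))
  set aF : Fin p → smoothFunctions p U := fun i =>
    ⟨fun x => (↑x : Fin p → ℝ) i - c i,
      aux_restrict_mem (fun y => y i - c i) ((contDiff_apply ℝ ℝ i).sub contDiff_const)⟩ with haF
  set bF : Fin p → smoothFunctions p U := fun i =>
    ⟨fun x => g i ↑x - g i c,
      aux_restrict_mem (fun y => g i y - g i c) ((hg i).sub contDiff_const)⟩ with hbF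
  set ρel : smoothFunctions p U :=
    ⟨fun x => 1 - χ₂ ↑x,
      aux_restrict_mem (fun y => 1 - χ₂ y) (contDiff_const.sub χ₂.contDiff)⟩ with hρel
  set uel : smoothFunctions p U :=
    ⟨fun x => (1 - χ ↑x) * (f : U → ℝ) x,
      mul_mem (aux_restrict_mem (fun y => 1 - χ y) (contDiff_const.sub χ.contDiff)) f.2⟩ with huel
  refine ⟨P, p + 1, Fin.snoc aF ρel, Fin.snoc bF uel, ?_, ?_, ?_⟩
  · intro j
    refine Fin.lastCases ?_ (fun i => ?_) j
    · simp [hρel, ← hcdef, hχ₂c]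
    · simp [haF, ← hcdef]
  · intro j
    refine Fin.lastCases ?_ (fun i => ?_) j
    · simp [huel, ← hcdef, hχc]
    · simp [hbF, ← hcdef]
  · intro x
    have hPeval : MvPolynomial.eval (↑x : Fin p → ℝ) P =
        (f : U → ℝ) x₀ + ∑ i, g i c * ((↑x : Fin p → ℝ) i - c i) := by
      simp [hPdef, map_sum]
    have hFx : F ↑x = χ ↑x * (f : U → ℝ) x := by
      simp only [hFdef, hfext]
      rw [dif_pos x.2]
    have hFc : F c = (f : U → ℝ) x₀ := by
      simp only [hFdef, hfext]
      rw [dif_pos x₀.2, hχc]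
      simp [hcdef]
    have h1 : χ ↑x * (f : U → ℝ) x = (f : U → ℝ) x₀ +
        ∑ i, ((↑x : Fin p → ℝ) i - c i) * g i ↑x := by
      rw [← hFx, hgeq ↑x, hFc]
    have hρu : (1 - χ₂ ↑x) * ((1 - χ ↑x) * (f : U → ℝ) x) =
        (1 - χ ↑x) * (f : U → ℝ) x := by
      by_cases hx3 : (↑x : Fin p → ℝ) ∈ closedBall c (r/3)
      · have : χ ↑x = 1 := χ.one_of_mem_closedBall hx3
        rw [this]; ring
      · have : χ₂ ↑x = 0 := χ₂.zero_of_le_dist (le_of_not_gt fun hlt => hx3 (by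
          simpa [mem_closedBall] using le_of_lt hlt))
        rw [this]; ring
    have hsum : ∑ i, g i c * ((↑x : Fin p → ℝ) i - c i) +
        ∑ i, ((↑x : Fin p → ℝ) i - c i) * (g i ↑x - g i c) =
        ∑ i, ((↑x : Fin p → ℝ) i - c i) * g i ↑x := by
      rw [← Finset.sum_add_distrib]
      exact Finset.sum_congr rfl fun i _ => by ring
    rw [hPeval, Fin.sum_univ_castSucc]
    simp only [Fin.snoc_castSucc, Fin.snoc_last, haF, hbF, hρel, huel]
    linear_combination h1 - hsum - hρu

end Aux

/-- A local `ℝ`-algebra morphism from `C^∞(U)`, `U ⊆ ℝ^p` open, to the algebra of formal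
power series `C^∞(U)[[ξ₁, …, ξ_q]]` is determined by its values on (restrictions to `U`
of) polynomials: if two such morphisms `φ, ψ` — local in the sense that whenever
`g x₀ = 0` the constant coefficients of `φ g` and `ψ g` vanish at `x₀` — agree on all
polynomials, then `φ = ψ`. -/
theorem local_algHom_determined_by_polynomials
    (p q : ℕ) (U : Set (Fin p → ℝ)) (hU : IsOpen U)
    (φ ψ : smoothFunctions p U →ₐ[ℝ] MvPowerSeries (Fin q) (smoothFunctions p U))
    (hφ : ∀ (x₀ : U) (g : smoothFunctions p U), (g : U → ℝ) x₀ = 0 →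
      ((MvPowerSeries.constantCoeff (σ := Fin q) (R := smoothFunctions p U) (φ g) : U → ℝ)) x₀ = 0)
    (hψ : ∀ (x₀ : U) (g : smoothFunctions p U), (g : U → ℝ) x₀ = 0 →
      ((MvPowerSeries.constantCoeff (σ := Fin q) (R := smoothFunctions p U) (ψ g) : U → ℝ)) x₀ = 0)
    (hpoly : ∀ (P : MvPolynomial (Fin p) ℝ) (g : smoothFunctions p U),
      (∀ x : U, (g : U → ℝ) x = MvPolynomial.eval (x : Fin p → ℝ) P) → φ g = ψ g) :
    φ = ψ := by
  classical
  -- constant coefficient identification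
  have hconst : ∀ (Φ : smoothFunctions p U →ₐ[ℝ] MvPowerSeries (Fin q) (smoothFunctions p U)),
      (∀ (x₀ : U) (g : smoothFunctions p U), (g : U → ℝ) x₀ = 0 →
        ((MvPowerSeries.constantCoeff (σ := Fin q) (R := smoothFunctions p U) (Φ g) : U → ℝ)) x₀ = 0) →
      ∀ (f : smoothFunctions p U) (x₀ : U),
        ((MvPowerSeries.constantCoeff (σ := Fin q) (R := smoothFunctions p U) (Φ f) : U → ℝ)) x₀ = (f : U → ℝ) x₀ := by
    intro Φ hΦ f x₀
    set r : ℝ := (f : U → ℝ) x₀ with hr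
    have hz : ((f - algebraMap ℝ (smoothFunctions p U) r : smoothFunctions p U) : U → ℝ) x₀ = 0 := by
      have : ((algebraMap ℝ (smoothFunctions p U) r : smoothFunctions p U) : U → ℝ) x₀ = r := rfl
      simp [this, hr]
    have h2 := hΦ x₀ _ hz
    rw [map_sub, map_sub, AlgHom.commutes] at h2
    rw [MvPowerSeries.algebraMap_apply, MvPowerSeries.constantCoeff_C] at h2
    have : ((MvPowerSeries.constantCoeff (σ := Fin q) (R := smoothFunctions p U) (Φ f) - algebraMap ℝ (smoothFunctions p U) r : smoothFunctions p U) : U → ℝ) x₀ =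
        ((MvPowerSeries.constantCoeff (σ := Fin q) (R := smoothFunctions p U) (Φ f) : U → ℝ)) x₀ - r := by
      have : ((algebraMap ℝ (smoothFunctions p U) r : smoothFunctions p U) : U → ℝ) x₀ = r := rfl
      simp [this]
    rw [this] at h2
    linarith
  -- degree of a multi-index
  set deg : (Fin q →₀ ℕ) → ℕ := fun n => n.sum fun _ e => e with hdeg
  have hdeg_add : ∀ k l : Fin q →₀ ℕ, deg (k + l) = deg k + deg l := by
    intro k l
    exact Finsupp.sum_add_index' (fun _ => rfl) (fun _ _ _ => rfl)
  have hdeg_pos : ∀ k : Fin q →₀ ℕ, k ≠ 0 → 0 < deg k := by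
    intro k hk
    rcases Nat.eq_zero_or_pos (deg k) with h | h
    · exfalso
      apply hk
      ext i
      by_cases hi : i ∈ k.support
      · exact (Finset.sum_eq_zero_iff.mp h i hi)
      · simpa using Finsupp.notMem_support_iff.mp hi
    · exact h
  -- main induction
  have key : ∀ d : ℕ, ∀ n : Fin q →₀ ℕ, deg n < d → ∀ (f : smoothFunctions p U) (x₀ : U),
      ((MvPowerSeries.coeff (R := smoothFunctions p U) n (φ f) : U → ℝ)) x₀ =
      ((MvPowerSeries.coeff (R := smoothFunctions p U) n (ψ f) : U → ℝ)) x₀ := by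
    intro d
    induction d with
    | zero => intro n hn; omega
    | succ d ih =>
      intro n hn f x₀
      by_cases h0 : n = 0
      · subst h0
        have e1 := hconst φ hφ f x₀
        have e2 := hconst ψ hψ f x₀
        rw [MvPowerSeries.coeff_zero_eq_constantCoeff]
        rw [e1, e2]
      · obtain ⟨P, k, a, b, ha, hb, hsum⟩ := aux_decomp hU f x₀
        set pf : smoothFunctions p U := ⟨fun x => MvPolynomial.eval (↑x : Fin p → ℝ) P, aux_poly_mem P⟩ with hpf
        have hfeq : f = pf + ∑ j, a j * b j := by
          apply Subtype.ext
          funext x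
          have hcoe : ((pf + ∑ j, a j * b j : smoothFunctions p U) : U → ℝ) x =
              (pf : U → ℝ) x + ∑ j, (a j : U → ℝ) x * (b j : U → ℝ) x := by
            push_cast
            simp [Finset.sum_apply]
          rw [hcoe]
          exact hsum x
        have hpfeq : φ pf = ψ pf := hpoly P pf fun x => rfl
        rw [hfeq, map_add φ, map_add ψ, map_sum φ, map_sum ψ, hpfeq,
          map_add (MvPowerSeries.coeff (R := smoothFunctions p U) n),
          map_add (MvPowerSeries.coeff (R := smoothFunctions p U) n)]
        have hterm : ∀ j : Fin k,
            ((MvPowerSeries.coeff (R := smoothFunctions p U) n (φ (a j * b j)) : U → ℝ)) x₀ =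
            ((MvPowerSeries.coeff (R := smoothFunctions p U) n (ψ (a j * b j)) : U → ℝ)) x₀ := by
          intro j
          rw [map_mul φ (a j) (b j), map_mul ψ (a j) (b j),
            MvPowerSeries.coeff_mul, MvPowerSeries.coeff_mul]
          have coesum : ∀ (z : Finset ((Fin q →₀ ℕ) × (Fin q →₀ ℕ)))
              (G : (Fin q →₀ ℕ) × (Fin q →₀ ℕ) → smoothFunctions p U),
              (((∑ kl ∈ z, G kl : smoothFunctions p U)) : U → ℝ) x₀ = ∑ kl ∈ z, ((G kl : U → ℝ)) x₀ := by
            intro z G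
            push_cast
            simp [Finset.sum_apply]
          rw [coesum, coesum]
          apply Finset.sum_congr rfl
          intro kl hkl
          have hklsum : kl.1 + kl.2 = n := Finset.HasAntidiagonal.mem_antidiagonal.mp hkl
          have hmul : ∀ (u v : smoothFunctions p U), (((u * v : smoothFunctions p U)) : U → ℝ) x₀ =
              ((u : U → ℝ)) x₀ * ((v : U → ℝ)) x₀ := fun u v => rfl
          rw [hmul, hmul]
          by_cases hk1 : kl.1 = 0
          · have hl2 : kl.2 = n := by rw [← hklsum, hk1, zero_add]
            have z1 : ((MvPowerSeries.coeff (R := smoothFunctions p U) kl.1 (φ (a j)) : U → ℝ)) x₀ = 0 := by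
              rw [hk1, MvPowerSeries.coeff_zero_eq_constantCoeff]
              rw [hconst φ hφ (a j) x₀]
              exact ha j
            have z2 : ((MvPowerSeries.coeff (R := smoothFunctions p U) kl.1 (ψ (a j)) : U → ℝ)) x₀ = 0 := by
              rw [hk1, MvPowerSeries.coeff_zero_eq_constantCoeff]
              rw [hconst ψ hψ (a j) x₀]
              exact ha j
            rw [z1, z2, zero_mul, zero_mul]
          · by_cases hk2 : kl.2 = 0
            · have z1 : ((MvPowerSeries.coeff (R := smoothFunctions p U) kl.2 (φ (b j)) : U → ℝ)) x₀ = 0 := by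
                rw [hk2, MvPowerSeries.coeff_zero_eq_constantCoeff]
                rw [hconst φ hφ (b j) x₀]
                exact hb j
              have z2 : ((MvPowerSeries.coeff (R := smoothFunctions p U) kl.2 (ψ (b j)) : U → ℝ)) x₀ = 0 := by
                rw [hk2, MvPowerSeries.coeff_zero_eq_constantCoeff]
                rw [hconst ψ hψ (b j) x₀]
                exact hb j
              rw [z1, z2, mul_zero, mul_zero]
            · have hd1 : deg kl.1 < d := by
                have := hdeg_add kl.1 kl.2
                rw [hklsum] at this
                have p1 := hdeg_pos kl.1 hk1
                have p2 := hdeg_pos kl.2 hk2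
                omega
              have hd2 : deg kl.2 < d := by
                have := hdeg_add kl.1 kl.2
                rw [hklsum] at this
                have p1 := hdeg_pos kl.1 hk1
                have p2 := hdeg_pos kl.2 hk2
                omega
              rw [ih kl.1 hd1 (a j) x₀, ih kl.2 hd2 (b j) x₀]
        -- combine
        have coeadd : ∀ (u v : smoothFunctions p U), (((u + v : smoothFunctions p U)) : U → ℝ) x₀ =
            ((u : U → ℝ)) x₀ + ((v : U → ℝ)) x₀ := fun u v => rfl
        rw [coeadd, coeadd]
        congr 1
        have coesum2 : ∀ (G : Fin k → MvPowerSeries (Fin q) (smoothFunctions p U)),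
            ((MvPowerSeries.coeff (R := smoothFunctions p U) n (∑ j, G j) : U → ℝ)) x₀ =
            ∑ j, ((MvPowerSeries.coeff (R := smoothFunctions p U) n (G j) : U → ℝ)) x₀ := by
          intro G
          rw [map_sum]
          push_cast
          simp [Finset.sum_apply]
        rw [coesum2, coesum2]
        exact Finset.sum_congr rfl fun j _ => hterm j
  apply AlgHom.ext
  intro f
  apply MvPowerSeries.ext
  intro n
  apply Subtype.ext
  funext x₀
  exact key (deg n + 1) n (Nat.lt_succ_self _) f x₀
end
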